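/- For every integer n≥1 there exist rational numbers s_1, …, s_n such that Δ_{n+1,0}(X) = (2X−1)·Σ_{i=1}^{n} s_i (X(X−1))^i in ℚ[X], and in any such representation necessarily s_n = (−1)^{n+1}/(3·2^n (n−1)!). Equivalently, the polynomial Δ_{n+1,0} has degree 2n+1 and its leading coefficient equals (−1)^{n+1}/(3·2^{n−1} (n−1)!). -/

import Mathlib

/-- `σ_i(j) = Σ_{1 ≤ n_1 < ⋯ < n_i ≤ j-1} n_1 ⋯ n_i`, with `σ_0(j) = 1`. -/
def sigmaP (i j : ℕ) : ℚ :=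
  ∑ t ∈ (Finset.Icc 1 (j - 1)).powersetCard i, ∏ m ∈ t, (m : ℚ)

/-- `Q_0(j) = 1` and `Q_k(j) = -Σ_{i=1}^{k} σ_i(j) Q_{k-i}(j)` for `k ≥ 1`. -/
def QP (j : ℕ) : ℕ → ℚ
  | 0 => 1
  | k + 1 => -∑ i : Fin (k + 1), sigmaP (i + 1) j * QP j (k - i)
  termination_by k => k
  decreasing_by omega

/-- `Δ_{N,0} = r_N - (-1)^N p_N`, given families `p`, `r` of interpolating polynomials. -/
noncomputable def DeltaN0 (p r : ℕ → Polynomial ℚ) (N : ℕ) : Polynomial ℚ :=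
  r N - (-1) ^ N * p N

open Polynomial Finset

lemma sigmaP_zero (j : ℕ) : sigmaP 0 j = 1 := by
  simp [sigmaP]

lemma sigmaP_one (i : ℕ) : sigmaP (i+1) 1 = 0 := by
  unfold sigmaP
  rw [Finset.powersetCard_eq_empty.2 (by simp)]
  simp

lemma sigma_rec (i j : ℕ) :
    sigmaP (i+1) (j+2) = sigmaP (i+1) (j+1) + (j+1 : ℚ) * sigmaP i (j+1) := by
  have hins : (Finset.Icc 1 (j+1)) = insert (j+1) (Finset.Icc 1 j) := by
    ext x; simp [Finset.mem_Icc, Finset.mem_insert]; omega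
  have hnot : (j+1) ∉ Finset.Icc 1 j := by simp
  unfold sigmaP
  have h1 : j+2-1 = j+1 := rfl
  have h2 : j+1-1 = j := rfl
  rw [h1, h2, hins, Finset.powersetCard_succ_insert hnot, Finset.sum_union, Finset.sum_image]
  · congr 1
    rw [Finset.mul_sum]
    refine Finset.sum_congr rfl ?_
    intro t ht
    have htn : (j+1) ∉ t := by
      rw [Finset.mem_powersetCard] at ht
      exact fun h => hnot (ht.1 h)
    rw [Finset.prod_insert htn]
    push_cast
    ring
  · intro t ht u hu h
    rw [Finset.mem_coe, Finset.mem_powersetCard] at ht hu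
    have htn : (j+1) ∉ t := fun hh => hnot (ht.1 hh)
    have hun : (j+1) ∉ u := fun hh => hnot (hu.1 hh)
    have := congrArg (fun s => Finset.erase s (j+1)) h
    simpa [Finset.erase_insert htn, Finset.erase_insert hun] using this
  · rw [Finset.disjoint_right]
    intro t ht ht2
    simp only [Finset.mem_image] at ht
    obtain ⟨u, hu, rfl⟩ := ht
    rw [Finset.mem_powersetCard] at ht2
    exact hnot (ht2.1 (Finset.mem_insert_self _ _))

lemma QP_zero (j : ℕ) : QP j 0 = 1 := by rw [QP]

lemma QP_one_val (k : ℕ) : QP 1 k = if k = 0 then 1 else 0 := by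
  induction k using Nat.strong_induction_on with
  | _ k ih =>
    match k with
    | 0 => rw [QP_zero]; rfl
    | k + 1 =>
      rw [QP]
      simp [sigmaP_one]

lemma QP_conv (j k : ℕ) :
    ∑ i ∈ Finset.range (k+1), sigmaP i j * QP j (k - i) = if k = 0 then 1 else 0 := by
  match k with
  | 0 => simp [sigmaP_zero, QP_zero]
  | k + 1 =>
    rw [Finset.sum_range_succ', if_neg (Nat.succ_ne_zero k)]
    simp only [Nat.sub_zero, sigmaP_zero, one_mul]
    rw [QP]
    rw [Fin.sum_univ_eq_sum_range (fun i => sigmaP (i + 1) j * QP j (k - i)) (k+1)]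
    have : ∀ i ∈ Finset.range (k+1), sigmaP (i+1) j * QP j (k + 1 - (i+1))
        = sigmaP (i+1) j * QP j (k - i) := by
      intro i hi
      have h : k + 1 - (i+1) = k - i := by omega
      rw [h]
    rw [Finset.sum_congr rfl this]
    ring

noncomputable def Sps (j : ℕ) : PowerSeries ℚ := PowerSeries.mk (fun i => sigmaP i j)
noncomputable def Qps (j : ℕ) : PowerSeries ℚ := PowerSeries.mk (QP j)

lemma SQ (j : ℕ) : Sps j * Qps j = 1 := by
  ext k
  rw [PowerSeries.coeff_mul, Finset.Nat.sum_antidiagonal_eq_sum_range_succ_mk]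
  simp only [Sps, Qps, PowerSeries.coeff_mk]
  rw [QP_conv]
  simp [PowerSeries.coeff_one]

lemma Srec (j : ℕ) :
    Sps (j+2) = Sps (j+1) * (1 + (PowerSeries.C (R := ℚ) (j+1)) * PowerSeries.X) := by
  ext k
  rw [mul_add, mul_one, map_add]
  rw [show Sps (j+1) * (PowerSeries.C (R := ℚ) (j+1) * PowerSeries.X)
      = PowerSeries.C (R := ℚ) (j+1) * (PowerSeries.X * Sps (j+1)) by ring]
  rw [PowerSeries.coeff_C_mul]
  match k with
  | 0 => simp [Sps, sigmaP_zero]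
  | k + 1 =>
    rw [PowerSeries.coeff_succ_X_mul]
    simp only [Sps, PowerSeries.coeff_mk]
    rw [sigma_rec k j]

lemma Qrec (j k : ℕ) :
    QP (j+1) (k+1) = QP (j+2) (k+1) + (j+1 : ℚ) * QP (j+2) k := by
  have key : Qps (j+1) = (1 + (PowerSeries.C (R := ℚ) (j+1)) * PowerSeries.X) * Qps (j+2) := by
    calc Qps (j+1) = Qps (j+1) * (Sps (j+2) * Qps (j+2)) := by rw [SQ]; ring
    _ = (Sps (j+1) * Qps (j+1)) * ((1 + (PowerSeries.C (R := ℚ) (j+1)) * PowerSeries.X) * Qps (j+2)) := by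
        rw [Srec]; ring
    _ = (1 + (PowerSeries.C (R := ℚ) (j+1)) * PowerSeries.X) * Qps (j+2) := by rw [SQ]; ring
  have := congrArg (PowerSeries.coeff (R := ℚ) (k+1)) key
  rw [add_mul, one_mul, map_add] at this
  rw [show (PowerSeries.C (R := ℚ) (j+1)) * PowerSeries.X * Qps (j+2)
      = PowerSeries.C (R := ℚ) (j+1) * (PowerSeries.X * Qps (j+2)) by ring,
    PowerSeries.coeff_C_mul, PowerSeries.coeff_succ_X_mul] at this
  simpa [Qps] using this

lemma poly_eq_of_eval (f g : Polynomial ℚ)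
    (h : ∀ j : ℕ, f.eval ((j:ℚ)+1) = g.eval ((j:ℚ)+1)) : f = g := by
  rw [← sub_eq_zero]
  apply Polynomial.eq_zero_of_infinite_isRoot
  apply Set.infinite_of_injective_forall_mem (f := fun j : ℕ => (j:ℚ)+1)
  · intro a b hab
    simp only [add_left_inj, Nat.cast_inj] at hab
    exact hab
  · intro j
    simp only [Set.mem_setOf_eq, Polynomial.IsRoot, Polynomial.eval_sub, h j, sub_self]

lemma coeff_comp_general (f g : Polynomial ℚ) (m k : ℕ) (hm : f.natDegree < m) :
    (f.comp g).coeff k = ∑ d ∈ Finset.range m, f.coeff d * (g^d).coeff k := by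
  conv_lhs => rw [f.as_sum_range' m hm]
  rw [show ((∑ d ∈ Finset.range m, Polynomial.monomial d (f.coeff d)).comp g)
      = ∑ d ∈ Finset.range m, (Polynomial.monomial d (f.coeff d)).comp g by
    simp [Polynomial.eval₂_finset_sum, Polynomial.comp]]
  rw [Polynomial.finset_sum_coeff]
  refine Finset.sum_congr rfl fun d _ => ?_
  rw [Polynomial.monomial_comp, Polynomial.coeff_C_mul]

lemma coeff_one_sub_X_pow (d k : ℕ) :
    ((1 - Polynomial.X : Polynomial ℚ)^d).coeff k = (-1)^k * (d.choose k : ℚ) := by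
  have h1 : (1 - Polynomial.X : Polynomial ℚ) = -(Polynomial.X + Polynomial.C (-1)) := by
    simp [Polynomial.C_neg]; ring
  rw [h1, neg_pow, show ((-1 : Polynomial ℚ))^d = Polynomial.C ((-1 : ℚ)^d) by
    simp [map_pow], Polynomial.coeff_C_mul, Polynomial.coeff_X_add_C_pow]
  by_cases hk : k ≤ d
  · have h2 : (-1 : ℚ)^(d-k) * (-1)^k = (-1)^d := by
      rw [← pow_add, Nat.sub_add_cancel hk]
    have h3 : (-1 : ℚ)^d * (-1)^(d-k) = (-1)^k := by
      rw [← h2, mul_comm ((-1:ℚ)^(d-k)) ((-1:ℚ)^k), mul_assoc, ← pow_add, ← two_mul, pow_mul]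
      simp
    rw [← mul_assoc, h3]
  · rw [Nat.choose_eq_zero_of_lt (by omega)]
    simp

lemma coeff_comp_X_add_one (f : Polynomial ℚ) (m k : ℕ) (hm : f.natDegree < m) :
    (f.comp (Polynomial.X + 1)).coeff k
      = ∑ d ∈ Finset.range m, f.coeff d * (d.choose k : ℚ) := by
  rw [coeff_comp_general f _ m k hm]
  refine Finset.sum_congr rfl fun d _ => ?_
  rw [Polynomial.coeff_X_add_one_pow]

lemma coeff_comp_one_sub_X (f : Polynomial ℚ) (m k : ℕ) (hm : f.natDegree < m) :
    (f.comp (1 - Polynomial.X)).coeff k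
      = (-1)^k * ∑ d ∈ Finset.range m, f.coeff d * (d.choose k : ℚ) := by
  rw [coeff_comp_general f _ m k hm, Finset.mul_sum]
  refine Finset.sum_congr rfl fun d _ => ?_
  rw [coeff_one_sub_X_pow]
  ring

section withP
variable (p : ℕ → Polynomial ℚ)
    (hpval : ∀ n : ℕ, ∀ j : ℕ, 1 ≤ j → (p n).eval (j : ℚ) = sigmaP n j)
include hpval

lemma p_zero : p 0 = 1 := by
  apply poly_eq_of_eval
  intro j
  have := hpval 0 (j+1) (by omega)
  push_cast at this
  rw [this, sigmaP_zero]
  simp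

lemma p_shift (n : ℕ) :
    (p (n+1)).comp (Polynomial.X + 1) = p (n+1) + Polynomial.X * p n := by
  apply poly_eq_of_eval
  intro j
  have h1 := hpval (n+1) (j+2) (by omega)
  have h2 := hpval (n+1) (j+1) (by omega)
  have h3 := hpval n (j+1) (by omega)
  push_cast at h1 h2 h3
  rw [Polynomial.eval_comp]
  simp only [Polynomial.eval_add, Polynomial.eval_mul, Polynomial.eval_X, Polynomial.eval_one]
  rw [show (j:ℚ) + 1 + 1 = (j:ℚ) + 2 by ring, h1, h2, h3, sigma_rec]

lemma p_eval_zero (n : ℕ) : (p (n+1)).eval 0 = 0 := by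
  have h := congrArg (Polynomial.eval (0:ℚ)) (p_shift p hpval n)
  rw [Polynomial.eval_comp] at h
  simp only [Polynomial.eval_add, Polynomial.eval_mul, Polynomial.eval_X, Polynomial.eval_one,
    zero_add, zero_mul, add_zero] at h
  have h1 := hpval (n+1) 1 le_rfl
  norm_num at h1
  rw [h1, sigmaP_one] at h
  linarith

lemma p_reflect : ∀ j n : ℕ, (p n).eval (-(j:ℚ)) = (-1)^n * QP (j+1) n := by
  intro j
  induction j with
  | zero =>
    intro n
    match n with
    | 0 => simp [p_zero p hpval, QP_zero]
    | n + 1 =>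
      rw [show (-(0:ℕ) : ℚ) = 0 by norm_num, p_eval_zero p hpval, QP_one_val]
      simp
  | succ j ihj =>
    intro n
    induction n with
    | zero => simp [p_zero p hpval, QP_zero]
    | succ n ihn =>
      have h := congrArg (Polynomial.eval (-(j:ℚ)-1)) (p_shift p hpval n)
      rw [Polynomial.eval_comp] at h
      simp only [Polynomial.eval_add, Polynomial.eval_mul, Polynomial.eval_X,
        Polynomial.eval_one] at h
      rw [show -(j:ℚ)-1+1 = -(j:ℚ) by ring] at h
      have hcast : -(j:ℚ)-1 = -((j+1 : ℕ):ℚ) := by push_cast; ring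
      rw [hcast] at h
      rw [ihj (n+1), ihn] at h
      -- h : (-1)^(n+1) * QP (j+1) (n+1) = eval (-(j+1)) (p (n+1)) + (-(j+1)) * ((-1)^n * QP (j+2) n)
      rw [Qrec j n] at h
      push_cast at h ⊢
      linear_combination -h
end withP

lemma sum_range_add' (c : ℕ → ℚ) (k r : ℕ) :
    ∑ d ∈ Finset.range (k + r), c d * (d.choose k : ℚ)
      = ∑ d ∈ Finset.range r, c (k + d) * ((k+d).choose k : ℚ) := by
  rw [Finset.sum_range_add]
  have h0 : ∑ d ∈ Finset.range k, c d * (d.choose k : ℚ) = 0 := by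
    apply Finset.sum_eq_zero
    intro d hd
    rw [Finset.mem_range] at hd
    rw [Nat.choose_eq_zero_of_lt hd]
    simp
  rw [h0, zero_add]

lemma topsum1 (c : ℕ → ℚ) (k : ℕ) :
    ∑ d ∈ Finset.range (k + 1), c d * (d.choose k : ℚ) = c k := by
  rw [sum_range_add' c k 1]
  simp

lemma topsum2 (c : ℕ → ℚ) (k : ℕ) :
    ∑ d ∈ Finset.range (k + 2), c d * (d.choose k : ℚ)
      = c k + ((k:ℚ)+1) * c (k+1) := by
  rw [sum_range_add' c k 2, Finset.sum_range_succ, Finset.sum_range_one]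
  rw [Nat.choose_succ_self_right]
  simp
  ring

lemma choose_plus_two (k : ℕ) : (((k+2).choose k : ℕ) : ℚ) = ((k:ℚ)+2)*((k:ℚ)+1)/2 := by
  have hsym : (k+2).choose k = (k+2).choose 2 := by
    have := Nat.choose_symm (n := k+2) (k := 2) (by omega)
    simpa using this
  have hdvd : 2 ∣ (k+2)*(k+1) := by
    have := Nat.even_mul_succ_self (k+1)
    rw [mul_comm] at this
    exact this.two_dvd
  have h2 : 2 * ((k+2).choose 2) = (k+2)*(k+1) := by
    rw [Nat.choose_two_right]
    have : (k+2) - 1 = k+1 := by omega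
    rw [this, Nat.mul_div_cancel' hdvd]
  rw [hsym]
  have := congrArg (fun x : ℕ => (x : ℚ)) h2
  push_cast at this
  linarith

lemma topsum3 (c : ℕ → ℚ) (k : ℕ) :
    ∑ d ∈ Finset.range (k + 3), c d * (d.choose k : ℚ)
      = c k + ((k:ℚ)+1) * c (k+1) + ((k:ℚ)+2)*((k:ℚ)+1)/2 * c (k+2) := by
  rw [sum_range_add' c k 3, Finset.sum_range_succ, Finset.sum_range_succ, Finset.sum_range_one]
  rw [Nat.choose_succ_self_right, show k+2 = (k+2) by rfl, choose_plus_two]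
  simp
  ring

section withPdeg
variable (p : ℕ → Polynomial ℚ)
    (hpval : ∀ n : ℕ, ∀ j : ℕ, 1 ≤ j → (p n).eval (j : ℚ) = sigmaP n j)
    (hpdeg : ∀ n : ℕ, (p n).natDegree ≤ 2 * n)
include hpval hpdeg

lemma coeff_a : ∀ m : ℕ, (p m).coeff (2*m) = 1/(2^m * m.factorial) := by
  intro m
  induction m with
  | zero => rw [p_zero p hpval]; simp
  | succ m ih =>
    have hdeg : (p (m+1)).natDegree < 2*m+3 := by
      have := hpdeg (m+1); omega
    have h := congrArg (fun q => q.coeff (2*m+1)) (p_shift p hpval m)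
    simp only [Polynomial.coeff_add] at h
    rw [coeff_comp_X_add_one (p (m+1)) (2*m+3) (2*m+1) hdeg] at h
    rw [show 2*m+3 = (2*m+1)+2 by ring] at h
    rw [topsum2 (fun d => (p (m+1)).coeff d) (2*m+1)] at h
    rw [Polynomial.coeff_X_mul, ih] at h
    -- h : c(2m+1) + (2m+1+1) * c(2m+2) = c(2m+1) + 1/(2^m * m!)
    have h2 : ((2*m:ℚ)+2) * (p (m+1)).coeff (2*m+2) = 1/(2^m * m.factorial) := by
      push_cast at h; linarith
    have hcast : (((m+1).factorial : ℕ) : ℚ) = ((m:ℚ)+1) * (m.factorial : ℚ) := by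
      rw [Nat.factorial_succ]; push_cast; ring
    have hne1 : (2:ℚ)^m ≠ 0 := by positivity
    have hne2 : ((m.factorial : ℕ) : ℚ) ≠ 0 := by
      exact_mod_cast Nat.cast_ne_zero.mpr (Nat.factorial_ne_zero m)
    rw [show 2*(m+1) = 2*m+2 by ring]
    rw [pow_succ, hcast]
    field_simp at h2 ⊢
    linarith

lemma b_extract (m : ℕ) :
    ((2*m:ℚ)+1) * (p (m+1)).coeff (2*m+1)
      + ((2*m:ℚ)+2)*((2*m:ℚ)+1)/2 * (p (m+1)).coeff (2*m+2)
      = (Polynomial.X * p m).coeff (2*m) := by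
  have hdeg : (p (m+1)).natDegree < 2*m+3 := by
    have := hpdeg (m+1); omega
  have h := congrArg (fun q => q.coeff (2*m)) (p_shift p hpval m)
  simp only [Polynomial.coeff_add] at h
  rw [coeff_comp_X_add_one (p (m+1)) (2*m+3) (2*m) hdeg] at h
  rw [show 2*m+3 = (2*m)+3 by ring] at h
  rw [topsum3 (fun d => (p (m+1)).coeff d) (2*m)] at h
  push_cast at h
  rw [show (2*m)+1 = 2*m+1 by ring, show (2*m)+2 = 2*m+2 by ring] at h
  linarith

lemma coeff_b : ∀ m : ℕ, (p (m+1)).coeff (2*m+1)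
    = -(2*(m:ℚ)+3)/(3 * 2^(m+1) * m.factorial) := by
  intro m
  induction m with
  | zero =>
    have h := b_extract p hpval hpdeg 0
    have ha := coeff_a p hpval hpdeg 1
    norm_num at h ha ⊢
    linarith
  | succ m ih =>
    have h := b_extract p hpval hpdeg (m+1)
    have ha := coeff_a p hpval hpdeg (m+2)
    rw [show m+1+1 = m+2 from rfl] at h
    rw [show 2*(m+1)+1 = 2*m+3 by omega, show 2*(m+1)+2 = 2*m+4 by omega,
        show 2*(m+1) = 2*m+1+1 by omega] at h
    rw [Polynomial.coeff_X_mul] at h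
    rw [show 2*(m+2) = 2*m+4 by omega] at ha
    rw [show m+1+1 = m+2 from rfl, show 2*(m+1)+1 = 2*m+3 by omega]
    have hf1 : (((m+1).factorial : ℕ) : ℚ) = ((m:ℚ)+1)*(m.factorial : ℕ) := by
      rw [Nat.factorial_succ]; push_cast; ring
    have hf2 : (((m+2).factorial : ℕ) : ℚ) = ((m:ℚ)+2)*((m:ℚ)+1)*((m.factorial : ℕ)) := by
      rw [Nat.factorial_succ, Nat.factorial_succ]; push_cast; ring
    have hne1 : (2:ℚ)^m ≠ 0 := by positivity
    have hne2 : ((m.factorial : ℕ) : ℚ) ≠ 0 := by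
      exact_mod_cast Nat.cast_ne_zero.mpr (Nat.factorial_ne_zero m)
    set F : ℚ := ((m.factorial : ℕ) : ℚ) with hF
    set A : ℚ := (p (m+2)).coeff (2*m+4) with hA
    set B : ℚ := (p (m+2)).coeff (2*m+3) with hB
    set Bm : ℚ := (p (m+1)).coeff (2*m+1) with hBm
    have ha' : (2:ℚ)^m*4 * (((m:ℚ)+2)*((m:ℚ)+1)*F) * A = 1 := by
      rw [ha, hf2, show (2:ℚ)^(m+2) = 2^m*4 by rw [pow_succ, pow_succ]; ring]
      field_simp
    have ih' : 3*((2:ℚ)^m*2)*F * Bm = -(2*(m:ℚ)+3) := by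
      rw [ih, show (2:ℚ)^(m+1) = 2^m*2 by rw [pow_succ]]
      field_simp
    push_cast at h
    have hc1 : (2*(m:ℚ)+3) ≠ 0 := by positivity
    have key : (2*(m:ℚ)+3) * ((12 * (2:ℚ)^m * ((m:ℚ)+1) * F) * B)
        = (2*(m:ℚ)+3) * (-(2*(m:ℚ)+5)) := by
      linear_combination (12*(2:ℚ)^m*((m:ℚ)+1)*F) * h - 3*(2*(m:ℚ)+3)*ha'
        + 2*((m:ℚ)+1)*ih'
    have key2 := mul_left_cancel₀ hc1 key
    rw [hf1, show (2:ℚ)^(m+1+1) = 2^m*4 by rw [pow_succ, pow_succ]; ring]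
    rw [eq_div_iff (by positivity : (3*((2:ℚ)^m*4)*(((m:ℚ)+1)*F)) ≠ 0)]
    push_cast
    linear_combination key2
end withPdeg

lemma T_monic : (Polynomial.X * (Polynomial.X - 1) : Polynomial ℚ).Monic := by
  have : (Polynomial.X - 1 : Polynomial ℚ) = Polynomial.X - Polynomial.C 1 := by simp
  exact Polynomial.monic_X.mul (this ▸ Polynomial.monic_X_sub_C 1)

lemma T_natDegree : (Polynomial.X * (Polynomial.X - 1) : Polynomial ℚ).natDegree = 2 := by
  have h1 : (Polynomial.X - 1 : Polynomial ℚ) = Polynomial.X - Polynomial.C 1 := by simp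
  rw [Polynomial.Monic.natDegree_mul Polynomial.monic_X (h1 ▸ Polynomial.monic_X_sub_C 1),
    Polynomial.natDegree_X, h1, Polynomial.natDegree_X_sub_C]

lemma Tpow_natDegree (i : ℕ) :
    ((Polynomial.X * (Polynomial.X - 1) : Polynomial ℚ)^i).natDegree = 2*i := by
  rw [T_monic.natDegree_pow, T_natDegree]
  omega

lemma Tpow_coeff_top (i : ℕ) :
    ((Polynomial.X * (Polynomial.X - 1) : Polynomial ℚ)^i).coeff (2*i) = 1 := by
  have := (T_monic.pow i).coeff_natDegree
  rwa [Tpow_natDegree] at this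

lemma L_comp : (2*Polynomial.X - 1 : Polynomial ℚ).comp (1 - Polynomial.X)
    = -(2*Polynomial.X - 1) := by
  simp only [Polynomial.sub_comp, Polynomial.mul_comp, Polynomial.one_comp,
    Polynomial.ofNat_comp, Polynomial.X_comp]
  ring

lemma T_comp : (Polynomial.X * (Polynomial.X - 1) : Polynomial ℚ).comp (1 - Polynomial.X)
    = Polynomial.X * (Polynomial.X - 1) := by
  simp only [Polynomial.mul_comp, Polynomial.sub_comp, Polynomial.one_comp, Polynomial.X_comp]
  ring

lemma rep_antisym (i : ℕ) :
    ((2*Polynomial.X - 1) * (Polynomial.X * (Polynomial.X - 1))^i : Polynomial ℚ).comp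
      (1 - Polynomial.X)
    = -((2*Polynomial.X - 1) * (Polynomial.X * (Polynomial.X - 1))^i) := by
  rw [Polynomial.mul_comp, Polynomial.pow_comp, L_comp, T_comp]
  ring

lemma coeff_L_mul (u : Polynomial ℚ) (k : ℕ) :
    ((2*Polynomial.X - 1) * u).coeff (k+1) = 2 * u.coeff k - u.coeff (k+1) := by
  have h2 : (Polynomial.C (2:ℚ)) = 2 := map_ofNat Polynomial.C 2
  have h : (2*Polynomial.X - 1) * u = Polynomial.C 2 * (Polynomial.X * u) - u := by
    rw [h2]; ring
  rw [h, Polynomial.coeff_sub, Polynomial.coeff_C_mul, Polynomial.coeff_X_mul]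

lemma W_natDegree_le (i : ℕ) :
    ((2*Polynomial.X - 1) * (Polynomial.X * (Polynomial.X - 1))^i : Polynomial ℚ).natDegree
      ≤ 2*i + 1 := by
  refine le_trans (Polynomial.natDegree_mul_le) ?_
  have h1 : (2*Polynomial.X - 1 : Polynomial ℚ).natDegree ≤ 1 := by
    refine le_trans (Polynomial.natDegree_sub_le _ _) (max_le ?_ ?_)
    · exact le_trans Polynomial.natDegree_mul_le (by simp)
    · simp
  rw [Tpow_natDegree]
  omega

lemma W_coeff_zero (i : ℕ) :
    ((2*Polynomial.X - 1) * (Polynomial.X * (Polynomial.X - 1))^(i+1) : Polynomial ℚ).coeff 0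
      = 0 := by
  rw [Polynomial.mul_coeff_zero]
  have : ((Polynomial.X * (Polynomial.X - 1) : Polynomial ℚ)^(i+1)).coeff 0 = 0 := by
    rw [Polynomial.coeff_zero_eq_eval_zero]
    simp
  rw [this, mul_zero]

lemma rep_exists : ∀ (m : ℕ) (f : Polynomial ℚ),
    f.comp (1 - Polynomial.X) = -f → f.coeff 0 = 0 → f.natDegree ≤ 2*m+1 →
    ∃ s : ℕ → ℚ, f = (2*Polynomial.X - 1) *
      ∑ i ∈ Finset.Icc 1 m, Polynomial.C (s i) * (Polynomial.X * (Polynomial.X - 1))^i := by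
  intro m
  induction m with
  | zero =>
    intro f hanti h0 hdeg
    refine ⟨0, ?_⟩
    rw [show Finset.Icc 1 0 = (∅ : Finset ℕ) by rfl]
    rw [Finset.sum_empty, mul_zero]
    have h1 : f.coeff 1 = 0 := by
      have h := congrArg (fun q => q.coeff 0) hanti
      simp only [Polynomial.coeff_neg] at h
      rw [coeff_comp_one_sub_X f 2 0 (by omega)] at h
      rw [Finset.sum_range_succ, Finset.sum_range_one] at h
      simp only [Nat.choose_zero_right, Nat.cast_one, mul_one, pow_zero, one_mul] at h
      rw [h0] at h
      linarith
    ext k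
    match k with
    | 0 => simpa using h0
    | 1 => simpa using h1
    | (k+2) =>
      rw [Polynomial.coeff_eq_zero_of_natDegree_lt (by omega : f.natDegree < k+2)]
      simp
  | succ m ihm =>
    intro f hanti h0 hdeg
    set c : ℚ := f.coeff (2*m+3) with hc
    set W : Polynomial ℚ := (2*Polynomial.X - 1) * (Polynomial.X * (Polynomial.X - 1))^(m+1)
      with hW
    set g : Polynomial ℚ := f - Polynomial.C (c/2) * W with hg
    have hWdeg : W.natDegree ≤ 2*m+3 := by
      have h := W_natDegree_le (m+1)
      rw [← hW] at h
      omega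
    have hWtop : W.coeff (2*m+3) = 2 := by
      rw [hW, show 2*m+3 = (2*m+2)+1 by omega, coeff_L_mul]
      rw [show 2*m+2 = 2*(m+1) by omega, Tpow_coeff_top]
      rw [Polynomial.coeff_eq_zero_of_natDegree_lt]
      · ring
      · rw [Tpow_natDegree]; omega
    have hganti : g.comp (1 - Polynomial.X) = -g := by
      rw [hg, Polynomial.sub_comp, Polynomial.mul_comp, Polynomial.C_comp, hanti, hW,
        rep_antisym (m+1)]
      ring
    have hg0 : g.coeff 0 = 0 := by
      rw [hg, Polynomial.coeff_sub, h0, Polynomial.coeff_C_mul, hW, W_coeff_zero]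
      ring
    have hgdeg3 : g.natDegree ≤ 2*m+2 := by
      rw [Polynomial.natDegree_le_iff_coeff_eq_zero]
      intro N hN
      rw [hg, Polynomial.coeff_sub, Polynomial.coeff_C_mul]
      rcases eq_or_lt_of_le (show 2*m+3 ≤ N by omega) with hEq | hLt
      · rw [← hEq, ← hc, hWtop]; ring
      · rw [Polynomial.coeff_eq_zero_of_natDegree_lt (by omega : f.natDegree < N),
          Polynomial.coeff_eq_zero_of_natDegree_lt (by omega : W.natDegree < N)]
        ring
    have hgtop : g.coeff (2*m+2) = 0 := by
      have h := congrArg (fun q => q.coeff (2*m+2)) hganti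
      simp only [Polynomial.coeff_neg] at h
      rw [coeff_comp_one_sub_X g (2*m+3) (2*m+2) (by omega)] at h
      rw [show 2*m+3 = (2*m+2)+1 by omega,
        topsum1 (fun d => g.coeff d) (2*m+2)] at h
      rw [show ((-1:ℚ))^(2*m+2) = 1 by
        rw [show 2*m+2 = 2*(m+1) by omega, pow_mul]; norm_num, one_mul] at h
      linarith
    have hgdeg : g.natDegree ≤ 2*m+1 := by
      rw [Polynomial.natDegree_le_iff_coeff_eq_zero]
      intro N hN
      rcases eq_or_lt_of_le (show 2*m+2 ≤ N by omega) with hEq | hLt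
      · rw [← hEq]; exact hgtop
      · exact Polynomial.coeff_eq_zero_of_natDegree_lt (by omega)
    obtain ⟨s', hs'⟩ := ihm g hganti hg0 hgdeg
    refine ⟨Function.update s' (m+1) (c/2), ?_⟩
    rw [Finset.sum_Icc_succ_top (by omega : 1 ≤ m+1)]
    have hsum : ∑ i ∈ Finset.Icc 1 m,
        Polynomial.C (Function.update s' (m+1) (c/2) i) * (Polynomial.X * (Polynomial.X - 1))^i
        = ∑ i ∈ Finset.Icc 1 m, Polynomial.C (s' i) * (Polynomial.X * (Polynomial.X - 1))^i := by
      refine Finset.sum_congr rfl fun i hi => ?_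
      rw [Finset.mem_Icc] at hi
      rw [Function.update_of_ne (by omega : i ≠ m+1)]
    rw [hsum, Function.update_self]
    have hfg : f = g + Polynomial.C (c/2) * W := by rw [hg]; ring
    rw [hfg, hs', hW]
    ring

lemma rep_coeff (s : ℕ → ℚ) (n : ℕ) (hn : 1 ≤ n) :
    ((2*Polynomial.X - 1) * ∑ i ∈ Finset.Icc 1 n,
        Polynomial.C (s i) * (Polynomial.X * (Polynomial.X - 1))^i).coeff (2*n+1)
      = 2 * s n := by
  set u : Polynomial ℚ := ∑ i ∈ Finset.Icc 1 n,
    Polynomial.C (s i) * (Polynomial.X * (Polynomial.X - 1))^i with hu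
  have hterm : ∀ i ∈ Finset.Icc 1 n,
      (Polynomial.C (s i) * (Polynomial.X * (Polynomial.X - 1))^i).natDegree ≤ 2*n := by
    intro i hi
    rw [Finset.mem_Icc] at hi
    refine le_trans (Polynomial.natDegree_C_mul_le _ _) ?_
    rw [Tpow_natDegree]
    omega
  have hudeg : u.natDegree ≤ 2*n := Polynomial.natDegree_sum_le_of_forall_le _ _ hterm
  have h1 : u.coeff (2*n+1) = 0 := Polynomial.coeff_eq_zero_of_natDegree_lt (by omega)
  have h2 : u.coeff (2*n) = s n := by
    rw [hu, Polynomial.finset_sum_coeff]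
    rw [Finset.sum_eq_single_of_mem n (Finset.mem_Icc.mpr ⟨hn, le_rfl⟩)]
    · rw [Polynomial.coeff_C_mul, Tpow_coeff_top, mul_one]
    · intro i hi hne
      rw [Finset.mem_Icc] at hi
      rw [Polynomial.coeff_C_mul,
        Polynomial.coeff_eq_zero_of_natDegree_lt (by rw [Tpow_natDegree]; omega), mul_zero]
  rw [coeff_L_mul, h1, h2]
  ring

theorem stmt13 (p r : ℕ → Polynomial ℚ)
    (hpdeg : ∀ n : ℕ, (p n).natDegree ≤ 2 * n)
    (hpval : ∀ n : ℕ, ∀ j : ℕ, 1 ≤ j → (p n).eval (j : ℚ) = sigmaP n j)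
    (hrdeg : ∀ n : ℕ, (r n).natDegree ≤ 2 * n)
    (hrval : ∀ n : ℕ, ∀ j : ℕ, 1 ≤ j → (r n).eval (j : ℚ) = QP j n)
    (n : ℕ) (hn : 1 ≤ n) :
    (∃ s : ℕ → ℚ, DeltaN0 p r (n + 1) =
        (2 * Polynomial.X - 1) *
          ∑ i ∈ Finset.Icc 1 n,
            Polynomial.C (s i) * (Polynomial.X * (Polynomial.X - 1)) ^ i) ∧
    (∀ s : ℕ → ℚ, DeltaN0 p r (n + 1) =
        (2 * Polynomial.X - 1) *
          ∑ i ∈ Finset.Icc 1 n,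
            Polynomial.C (s i) * (Polynomial.X * (Polynomial.X - 1)) ^ i →
      s n = (-1) ^ (n + 1) / (3 * 2 ^ n * ((n - 1).factorial : ℚ))) ∧
    (DeltaN0 p r (n + 1)).natDegree = 2 * n + 1 ∧
    (DeltaN0 p r (n + 1)).leadingCoeff =
      (-1) ^ (n + 1) / (3 * 2 ^ (n - 1) * ((n - 1).factorial : ℚ)) := by
  obtain ⟨ν, rfl⟩ : ∃ ν, n = ν + 1 := ⟨n-1, by omega⟩
  rw [show ν+1+1 = ν+2 from rfl, show ν+1-1 = ν from rfl]
  -- r in terms of p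
  have hrN : r (ν+2) = (-1 : Polynomial ℚ)^(ν+2) * ((p (ν+2)).comp (1 - Polynomial.X)) := by
    apply poly_eq_of_eval
    intro j
    have hv := hrval (ν+2) (j+1) (by omega)
    push_cast at hv
    rw [hv, Polynomial.eval_mul, Polynomial.eval_pow, Polynomial.eval_neg, Polynomial.eval_one,
      Polynomial.eval_comp]
    simp only [Polynomial.eval_sub, Polynomial.eval_one, Polynomial.eval_X]
    rw [show (1:ℚ) - ((j:ℚ)+1) = -(j:ℚ) by ring, p_reflect p hpval j (ν+2)]
    rw [← mul_assoc, ← pow_add]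
    rw [Even.neg_one_pow ⟨ν+2, by ring⟩, one_mul]
  have hCpow : ((-1 : Polynomial ℚ))^(ν+2) = Polynomial.C ((-1:ℚ)^(ν+2)) := by
    rw [map_pow, map_neg, map_one]
  have hDq : DeltaN0 p r (ν+2) = Polynomial.C ((-1:ℚ)^(ν+2)) *
      ((p (ν+2)).comp (1 - Polynomial.X) - p (ν+2)) := by
    rw [DeltaN0, hrN, hCpow]
    ring
  set q : Polynomial ℚ := (p (ν+2)).comp (1 - Polynomial.X) - p (ν+2) with hqdef
  have hPdeg : (p (ν+2)).natDegree ≤ 2*ν+4 := by have := hpdeg (ν+2); omega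
  have hPdeg' : (p (ν+2)).natDegree < 2*ν+5 := by omega
  have h1X : (1 - Polynomial.X : Polynomial ℚ).natDegree = 1 := by
    have h : (1 - Polynomial.X : Polynomial ℚ) = -(Polynomial.X - Polynomial.C 1) := by
      rw [Polynomial.C_1]; ring
    rw [h, Polynomial.natDegree_neg, Polynomial.natDegree_X_sub_C]
  have hcomp_deg : ((p (ν+2)).comp (1 - Polynomial.X)).natDegree ≤ 2*ν+4 := by
    refine le_trans Polynomial.natDegree_comp_le ?_
    rw [h1X, mul_one]
    exact hPdeg
  have ha := coeff_a p hpval hpdeg (ν+2)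
  rw [show 2*(ν+2) = 2*ν+4 by omega] at ha
  have hb := coeff_b p hpval hpdeg (ν+1)
  rw [show ν+1+1 = ν+2 from rfl, show 2*(ν+1)+1 = 2*ν+3 by omega] at hb
  -- factorial facts
  have hfpos : (0:ℚ) < (ν.factorial : ℚ) := by exact_mod_cast Nat.factorial_pos ν
  have hf1 : (((ν+1).factorial : ℕ) : ℚ) = ((ν:ℚ)+1)*(ν.factorial : ℕ) := by
    rw [Nat.factorial_succ]; push_cast; ring
  have hf2 : (((ν+2).factorial : ℕ) : ℚ) = ((ν:ℚ)+2)*((ν:ℚ)+1)*((ν.factorial : ℕ)) := by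
    rw [Nat.factorial_succ, Nat.factorial_succ]; push_cast; ring
  have hne1 : (2:ℚ)^ν ≠ 0 := by positivity
  have hne2 : ((ν.factorial : ℕ) : ℚ) ≠ 0 := ne_of_gt hfpos
  -- coefficient of q at 2ν+3
  have hcomp3 : ((p (ν+2)).comp (1 - Polynomial.X)).coeff (2*ν+3)
      = -((p (ν+2)).coeff (2*ν+3) + (2*(ν:ℚ)+4)*(p (ν+2)).coeff (2*ν+4)) := by
    rw [coeff_comp_one_sub_X _ (2*ν+5) _ hPdeg', show 2*ν+5 = (2*ν+3)+2 by omega,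
      topsum2 (fun d => (p (ν+2)).coeff d) (2*ν+3)]
    rw [Odd.neg_one_pow ⟨ν+1, by omega⟩]
    push_cast
    rw [show (2*ν+3)+1 = 2*ν+4 by omega]
    ring
  have hq3 : q.coeff (2*ν+3) = 1/(3*2^ν*(ν.factorial:ℚ)) := by
    rw [hqdef, Polynomial.coeff_sub, hcomp3, hb, ha, hf1, hf2,
      show (2:ℚ)^(ν+2) = 2^ν*4 by rw [pow_succ, pow_succ]; ring]
    push_cast
    field_simp
    ring
  have hcomp4 : ((p (ν+2)).comp (1 - Polynomial.X)).coeff (2*ν+4)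
      = (p (ν+2)).coeff (2*ν+4) := by
    rw [coeff_comp_one_sub_X _ (2*ν+5) _ hPdeg', show 2*ν+5 = (2*ν+4)+1 by omega,
      topsum1 (fun d => (p (ν+2)).coeff d) (2*ν+4)]
    rw [Even.neg_one_pow ⟨ν+2, by omega⟩, one_mul]
  have hq4 : q.coeff (2*ν+4) = 0 := by
    rw [hqdef, Polynomial.coeff_sub, hcomp4]; ring
  have hqdeg : q.natDegree ≤ 2*ν+3 := by
    rw [Polynomial.natDegree_le_iff_coeff_eq_zero]
    intro N hN
    rcases eq_or_lt_of_le (show 2*ν+4 ≤ N by omega) with hEq | hLt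
    · rw [← hEq]; exact hq4
    · rw [hqdef, Polynomial.coeff_sub,
        Polynomial.coeff_eq_zero_of_natDegree_lt (by omega),
        Polynomial.coeff_eq_zero_of_natDegree_lt (by omega)]
      ring
  have hqanti : q.comp (1 - Polynomial.X) = -q := by
    rw [hqdef, Polynomial.sub_comp, Polynomial.comp_assoc]
    have hXX : ((1:Polynomial ℚ) - Polynomial.X).comp (1 - Polynomial.X) = Polynomial.X := by
      rw [Polynomial.sub_comp, Polynomial.one_comp, Polynomial.X_comp]; ring
    rw [hXX, Polynomial.comp_X]
    ring
  have hq0 : q.coeff 0 = 0 := by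
    rw [hqdef, Polynomial.coeff_sub, Polynomial.coeff_zero_eq_eval_zero,
      Polynomial.coeff_zero_eq_eval_zero, Polynomial.eval_comp]
    simp only [Polynomial.eval_sub, Polynomial.eval_one, Polynomial.eval_X, sub_zero]
    have h1 := hpval (ν+2) 1 le_rfl
    norm_num at h1
    rw [h1, show sigmaP (ν+2) 1 = 0 from sigmaP_one (ν+1),
      show (p (ν+2)).eval 0 = 0 from p_eval_zero p hpval (ν+1)]
    ring
  -- D level
  have hD3 : (DeltaN0 p r (ν+2)).coeff (2*ν+3)
      = (-1:ℚ)^(ν+2) * (1/(3*2^ν*(ν.factorial:ℚ))) := by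
    rw [hDq, Polynomial.coeff_C_mul, hq3]
  have hpos : (0:ℚ) < 3*2^ν*(ν.factorial:ℚ) := by positivity
  have hne3 : (-1:ℚ)^(ν+2) * (1/(3*2^ν*(ν.factorial:ℚ))) ≠ 0 := by
    apply mul_ne_zero
    · exact pow_ne_zero _ (by norm_num)
    · exact one_div_ne_zero (ne_of_gt hpos)
  have hDanti : (DeltaN0 p r (ν+2)).comp (1 - Polynomial.X) = -(DeltaN0 p r (ν+2)) := by
    rw [hDq, Polynomial.mul_comp, Polynomial.C_comp, hqanti]
    ring
  have hD0 : (DeltaN0 p r (ν+2)).coeff 0 = 0 := by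
    rw [hDq, Polynomial.coeff_C_mul, hq0, mul_zero]
  have hDdeg_le : (DeltaN0 p r (ν+2)).natDegree ≤ 2*ν+3 := by
    rw [hDq]
    exact le_trans (Polynomial.natDegree_C_mul_le _ _) hqdeg
  have hDnat : (DeltaN0 p r (ν+2)).natDegree = 2*ν+3 := by
    refine le_antisymm hDdeg_le (Polynomial.le_natDegree_of_ne_zero ?_)
    rw [hD3]
    exact hne3
  refine ⟨?_, ?_, ?_, ?_⟩
  · exact rep_exists (ν+1) _ hDanti hD0 (le_trans hDdeg_le (by omega))
  · intro s hs
    have hcoeff := congrArg (fun u : Polynomial ℚ => u.coeff (2*(ν+1)+1)) hs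
    rw [rep_coeff s (ν+1) (by omega)] at hcoeff
    rw [show 2*(ν+1)+1 = 2*ν+3 by omega] at hcoeff
    rw [hD3] at hcoeff
    have hs' : s (ν+1) = (-1:ℚ)^(ν+2) * (1/(3*2^ν*(ν.factorial:ℚ))) / 2 := by
      linarith
    rw [hs']
    rw [show ((-1:ℚ))^(ν+1+1) = (-1)^(ν+2) from rfl,
      show (2:ℚ)^(ν+1) = 2^ν*2 by rw [pow_succ]]
    field_simp
  · rw [hDnat]; omega
  · rw [Polynomial.leadingCoeff, hDnat, hD3]
    field_simp
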